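/- Let p be a prime, k a field of characteristic p, and consider the field k((\pi)) of formal Laurent series with the Frobenius \varphi acting as the p-th power map on coefficients composed with \pi \mapsto (1+\pi)^p - 1. For the operator \gamma_1 acting by \pi \mapsto (1+\pi)^{1+p} - 1 = \pi + \pi^p + \pi^{p+1} (mod p, i.e. in characteristic p), and for the e-th root variable \pi_K with \pi_K^e = \pi where p \nmid e: if a \in k((\pi_K)) has lowest-degree term of degree n = j p^{\kappa} with p \nmid j, then (\gamma_1 - 1)(\pi_K^n) has lowest-degree term (j/e) \pi_K^{n + e p^{\kappa}(p-1)}. In particular the \pi_K-adic valuation of (\gamma_1-1)\pi_K^n equals n + e p^\kappa (p-1). -/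

import Mathlib

open HahnSeries

section Aux
variable {k : Type*} [Field k]

private lemma lc_eq {x : LaurentSeries k} (hx : x ≠ 0) : x.leadingCoeff = x.coeff x.order := by
  rw [leadingCoeff_eq]

private lemma order_eq_of {y : LaurentSeries k} {d : ℤ} (h0 : y.coeff d ≠ 0)
    (hlow : ∀ i < d, y.coeff i = 0) : y.order = d :=
  le_antisymm (order_le_of_coeff_ne_zero h0)
    (le_of_not_gt fun h => (coeff_order_eq_zero.not.mpr (ne_zero_of_coeff_ne_zero h0)) (hlow _ h))

private lemma auxA (a b : LaurentSeries k) (d₁ d₂ : ℤ)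
    (ha : ∀ i < d₁, a.coeff i = 0) (hb : ∀ i < d₂, b.coeff i = 0) :
    (∀ i < d₁ + d₂, (a * b).coeff i = 0) ∧
      (a * b).coeff (d₁ + d₂) = a.coeff d₁ * b.coeff d₂ := by
  rcases eq_or_ne a 0 with rfl | ha0
  · simp
  rcases eq_or_ne b 0 with rfl | hb0
  · simp
  have hda : d₁ ≤ a.order := le_of_not_gt fun h => (coeff_order_eq_zero.not.mpr ha0) (ha _ h)
  have hdb : d₂ ≤ b.order := le_of_not_gt fun h => (coeff_order_eq_zero.not.mpr hb0) (hb _ h)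
  have hord : (a * b).order = a.order + b.order := order_mul ha0 hb0
  constructor
  · intro i hi
    apply coeff_eq_zero_of_lt_order
    rw [hord]; omega
  · rcases hda.lt_or_eq with h1 | h1
    · rw [coeff_eq_zero_of_lt_order (x := a) h1, zero_mul, coeff_eq_zero_of_lt_order]
      rw [hord]; omega
    · rcases hdb.lt_or_eq with h2 | h2
      · rw [coeff_eq_zero_of_lt_order (x := b) h2, mul_zero, coeff_eq_zero_of_lt_order]
        rw [hord]; omega
      · rw [h1, h2, coeff_mul_order_add_order, lc_eq ha0, lc_eq hb0]

private lemma auxD (a : LaurentSeries k) (d : ℤ) (ha : ∀ i < d, a.coeff i = 0) (m : ℕ) :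
    (∀ i < (m : ℤ) * d, (a ^ m).coeff i = 0) ∧
      (a ^ m).coeff ((m : ℤ) * d) = (a.coeff d) ^ m := by
  induction m with
  | zero =>
    simp only [Nat.cast_zero, zero_mul, pow_zero]
    constructor
    · intro i hi
      rw [HahnSeries.coeff_one, if_neg (by omega)]
    · rw [HahnSeries.coeff_one, if_pos rfl]
  | succ m ih =>
    have key := auxA (a ^ m) a ((m : ℤ) * d) d ih.1 ha
    have hc : ((m : ℤ) + 1) * d = (m : ℤ) * d + d := by ring
    constructor
    · intro i hi
      rw [pow_succ]
      exact key.1 i (by push_cast at hi; omega)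
    · rw [pow_succ]
      push_cast
      rw [hc, key.2, ih.2, pow_succ]

private lemma auxB (w : LaurentSeries k) (d : ℤ) (hd : 0 < d)
    (hw : ∀ i < d, w.coeff i = 0) (m : ℕ) :
    (∀ i < d, ((1 + w) ^ m).coeff i = if i = 0 then 1 else 0) ∧
      ((1 + w) ^ m).coeff d = (m : k) * w.coeff d := by
  induction m with
  | zero =>
    simp only [pow_zero, Nat.cast_zero, zero_mul]
    exact ⟨fun i _ => by simp [HahnSeries.coeff_one],
      by simp [HahnSeries.coeff_one, hd.ne']⟩
  | succ m ih =>
    have hz : ∀ i < d, ((1 + w) ^ m - 1).coeff i = 0 := by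
      intro i hi
      rw [HahnSeries.coeff_sub, ih.1 i hi, HahnSeries.coeff_one]
      split_ifs <;> simp
    have key := auxA ((1 + w) ^ m - 1) w d d hz hw
    have expand : (1 + w) ^ (m + 1) = (1 + w) ^ m + (w + ((1 + w) ^ m - 1) * w) := by ring
    constructor
    · intro i hi
      rw [expand, HahnSeries.coeff_add, HahnSeries.coeff_add, hw i hi,
        key.1 i (by omega), ih.1 i hi, add_zero, add_zero]
    · rw [expand, HahnSeries.coeff_add, HahnSeries.coeff_add, ih.2,
        key.1 d (by omega), add_zero]
      push_cast
      ring

end Aux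

section Aux2
variable {k : Type*} [Field k]

private lemma auxC (w : LaurentSeries k) (d : ℤ) (hd : 0 < d)
    (hw : ∀ i < d, w.coeff i = 0) (m : ℤ) :
    (∀ i < d, ((1 + w) ^ m).coeff i = if i = 0 then 1 else 0) ∧
      ((1 + w) ^ m).coeff d = (m : k) * w.coeff d := by
  have h1 : (1 + w : LaurentSeries k) ≠ 0 := by
    intro h
    have h0 : (1 + w : LaurentSeries k).coeff 0 = 0 := by rw [h]; simp
    rw [HahnSeries.coeff_add, hw 0 hd, add_zero, HahnSeries.coeff_one] at h0
    simp at h0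
  set a := m.toNat with hadef
  set b := (-m).toNat with hbdef
  have hm : m = (a : ℤ) - (b : ℤ) := by omega
  obtain ⟨hA1, hA2⟩ := auxB w d hd hw a
  obtain ⟨hB1, hB2⟩ := auxB w d hd hw b
  have hPb0 : ((1 + w) ^ b : LaurentSeries k) ≠ 0 := pow_ne_zero _ h1
  have hordb : ((1 + w) ^ b : LaurentSeries k).order = 0 := by
    apply order_eq_of
    · rw [hB1 0 hd]; simp
    · intro i hi
      rw [hB1 i (hi.trans hd), if_neg hi.ne]
  set r := ((1 + w) ^ b : LaurentSeries k)⁻¹ with hrdef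
  have hr0 : r ≠ 0 := inv_ne_zero hPb0
  have hmul : r * (1 + w) ^ b = 1 := inv_mul_cancel₀ hPb0
  have hordr : r.order = 0 := by
    have h2 := order_mul hr0 hPb0
    rw [hmul, order_one, hordb, add_zero] at h2
    omega
  have hrc0 : r.coeff 0 = 1 := by
    have hh := coeff_mul_order_add_order r ((1 + w) ^ b)
    rw [hordr, hordb, add_zero, hmul, lc_eq hr0, lc_eq hPb0, hordr, hordb,
      hB1 0 hd, if_pos rfl, mul_one, HahnSeries.coeff_one] at hh
    simpa using hh.symm
  have hrlow : ∀ i < (0 : ℤ), r.coeff i = 0 := fun i hi =>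
    coeff_eq_zero_of_lt_order (by rw [hordr]; exact hi)
  have hqeq : (1 + w) ^ m = ((1 + w) ^ a : LaurentSeries k) * r := by
    rw [hm, zpow_sub₀ h1, zpow_natCast, zpow_natCast, div_eq_mul_inv, hrdef]
  have hqeq1 : (1 + w) ^ m - 1 = ((1 + w) ^ a - (1 + w) ^ b) * r := by
    rw [sub_mul, hrdef, mul_inv_cancel₀ hPb0, ← hrdef, ← hqeq]
  have hsub : ∀ i < d, ((1 + w) ^ a - (1 + w) ^ b : LaurentSeries k).coeff i = 0 := by
    intro i hi
    rw [HahnSeries.coeff_sub, hA1 i hi, hB1 i hi, sub_self]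
  have key := auxA _ r d 0 hsub hrlow
  rw [add_zero] at key
  have split1 : ∀ i : ℤ, ((1 + w) ^ m).coeff i
      = ((1 + w) ^ m - 1).coeff i + (1 : LaurentSeries k).coeff i := by
    intro i
    rw [HahnSeries.coeff_sub]; ring
  constructor
  · intro i hi
    rw [split1, hqeq1, key.1 i hi, zero_add, HahnSeries.coeff_one]
    split_ifs <;> rfl
  · rw [split1, hqeq1, key.2, hrc0, mul_one, HahnSeries.coeff_sub, hA2, hB2,
      HahnSeries.coeff_one, if_neg hd.ne', add_zero]
    have : ((m : ℤ) : k) = (a : k) - (b : k) := by rw [hm]; push_cast; ring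
    rw [this, sub_mul]

private lemma single_zpow' (m : ℤ) :
    (single (1 : ℤ) (1 : k)) ^ m = single m (1 : k) := by
  have hnat : ∀ t : ℕ, (single (1 : ℤ) (1 : k)) ^ t = single (t : ℤ) 1 := by
    intro t
    rw [single_pow]
    norm_num
  rcases m with t | t
  · rw [Int.ofNat_eq_coe, zpow_natCast, hnat]
  · rw [zpow_negSucc, hnat]
    apply inv_eq_of_mul_eq_one_left
    rw [single_mul_single]
    have h2 : Int.negSucc t + ((t + 1 : ℕ) : ℤ) = 0 := by
      rw [Int.negSucc_eq]; push_cast; ring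
    rw [h2, one_mul, single_zero_one]

private lemma cast_pow_fix (p : ℕ) (hp : p.Prime) [CharP k p] (e κ : ℕ) :
    ((e : k)) ^ p ^ κ = (e : k) := by
  haveI : Fact p.Prime := ⟨hp⟩
  induction κ with
  | zero => simp
  | succ κ ih =>
    rw [pow_succ, pow_mul, ih]
    have h : (e : k) = ZMod.castHom (dvd_refl p) k (e : ZMod p) := by simp
    rw [h, ← map_pow, ZMod.pow_card]

end Aux2

/-- In `E_K = k((π_K))` with `π = π_K^e` (`k` of characteristic `p`, `p ∤ e`), let `u` be
the `e`-th root of `1 + π^(p-1) + π^p` with constant term `1` (given by the binomial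
series), and let `γ₁` be the `k`-algebra endomorphism with `γ₁(π_K) = π_K · u`.  Then for
`n = j·p^κ` with `p ∤ j`, the element `(γ₁ - 1)(π_K^n)` is nonzero with lowest-degree
term `(j/e)·π_K^(n + e·p^κ·(p-1))`; in particular its `π_K`-adic valuation is
`n + e·p^κ·(p-1)`. -/
theorem stmt_13 (p : ℕ) (hp : p.Prime) (e : ℕ) (he : 0 < e) (hpe : ¬ p ∣ e)
    (k : Type*) [Field k] [CharP k p]
    (x : LaurentSeries k) (hx : x = HahnSeries.single (1 : ℤ) (1 : k))
    (u : LaurentSeries k) (hu : u ^ e = 1 + x ^ (e * (p - 1)) + x ^ (e * p))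
    (hu0 : u.coeff 0 = 1)
    (γ₁ : LaurentSeries k →ₐ[k] LaurentSeries k) (hγ₁ : γ₁ x = x * u)
    (n j : ℤ) (κ : ℕ) (hn : n = j * (p : ℤ) ^ κ) (hj : ¬ (p : ℤ) ∣ j) :
    γ₁ (x ^ n) - x ^ n ≠ 0 ∧
      (γ₁ (x ^ n) - x ^ n).order = n + (e : ℤ) * (p : ℤ) ^ κ * ((p : ℤ) - 1) ∧
      (γ₁ (x ^ n) - x ^ n).coeff (n + (e : ℤ) * (p : ℤ) ^ κ * ((p : ℤ) - 1)) =
        (j : k) * (e : k)⁻¹ := by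
  haveI : Fact p.Prime := ⟨hp⟩
  haveI : CharP (LaurentSeries k) p :=
    charP_of_injective_ringHom (HahnSeries.C_injective (Γ := ℤ) (R := k)) p
  subst hx hn
  have hek : (e : k) ≠ 0 := fun h => hpe ((CharP.cast_eq_zero_iff k p e).mp h)
  have hjk : (j : k) ≠ 0 := fun h => hj ((CharP.intCast_eq_zero_iff k p j).mp h)
  set A : ℕ := e * (p - 1) with hA
  set B : ℕ := e * p with hB
  have hAB : A < B := by
    have h2 := hp.one_lt
    rw [hA, hB]
    exact mul_lt_mul_of_pos_left (by omega) he
  have hA0 : 0 < A := Nat.mul_pos he (by have := hp.one_lt; omega)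
  have hxA : (single (1 : ℤ) (1 : k)) ^ A = single (A : ℤ) 1 := by
    rw [single_pow]; norm_num
  have hxB : (single (1 : ℤ) (1 : k)) ^ B = single (B : ℤ) 1 := by
    rw [single_pow]; norm_num
  set s : LaurentSeries k := single (A : ℤ) 1 + single (B : ℤ) 1 with hs
  have hus : u ^ e - 1 = s := by rw [hu, hxA, hxB, hs]; ring
  have hsc : ∀ i : ℤ, s.coeff i
      = (if i = (A : ℤ) then 1 else 0) + (if i = (B : ℤ) then 1 else 0) := by
    intro i
    rw [hs, HahnSeries.coeff_add, HahnSeries.coeff_single, HahnSeries.coeff_single]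
    split_ifs <;> rfl
  have hABz : (A : ℤ) < (B : ℤ) := by exact_mod_cast hAB
  have hA0z : (0 : ℤ) < (A : ℤ) := by exact_mod_cast hA0
  have hsA : s.coeff (A : ℤ) = 1 := by
    rw [hsc]
    rw [if_pos rfl, if_neg (by omega)]
    ring
  have hu0' : u ≠ 0 := by
    intro h
    rw [h, zero_pow he.ne', zero_sub] at hus
    rw [← hus] at hsA
    rw [HahnSeries.coeff_neg, HahnSeries.coeff_one, if_neg (by omega : ¬ (A:ℤ) = 0)] at hsA
    simp at hsA
  have houe : (u ^ e).order = 0 := by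
    have h1 : (u ^ e) = 1 + s := by rw [← hus]; ring
    rw [h1]
    apply order_eq_of
    · rw [HahnSeries.coeff_add, HahnSeries.coeff_one, hsc,
        if_pos rfl, if_neg (by omega), if_neg (by omega)]
      simp
    · intro i hi
      rw [HahnSeries.coeff_add, HahnSeries.coeff_one, hsc,
        if_neg (by omega), if_neg (by omega), if_neg (by omega)]
      ring
  have hordu : u.order = 0 := by
    have h2 := order_pow u e
    rw [houe, nsmul_eq_mul] at h2
    rcases mul_eq_zero.mp h2.symm with h | h
    · exact absurd h (by exact_mod_cast he.ne')
    · exact h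
  set w₀ : LaurentSeries k := u - 1 with hw₀def
  have huw : u = 1 + w₀ := by rw [hw₀def]; ring
  have hw₀low : ∀ i ≤ (0 : ℤ), w₀.coeff i = 0 := by
    intro i hi
    rcases hi.lt_or_eq with h | h
    · rw [hw₀def, HahnSeries.coeff_sub,
        coeff_eq_zero_of_lt_order (by rw [hordu]; exact h),
        HahnSeries.coeff_one, if_neg h.ne]
      ring
    · rw [h, hw₀def, HahnSeries.coeff_sub, hu0, HahnSeries.coeff_one, if_pos rfl, sub_self]
  have hw₀ne : w₀ ≠ 0 := by
    intro h
    have h1 : u ^ e - 1 = 0 := by rw [huw, h, add_zero, one_pow, sub_self]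
    have hs0 : s = 0 := by rw [← hus, h1]
    rw [hs0] at hsA
    simp at hsA
  set d₀ := w₀.order with hd₀def
  have hd₀pos : 0 < d₀ := by
    by_contra h
    exact (coeff_order_eq_zero.not.mpr hw₀ne) (hw₀low _ (by omega))
  have hw₀lt : ∀ i < d₀, w₀.coeff i = 0 := fun i hi => coeff_eq_zero_of_lt_order hi
  obtain ⟨hE1, hE2⟩ := auxB w₀ d₀ hd₀pos hw₀lt e
  have hslow : ∀ i < d₀, s.coeff i = 0 := by
    intro i hi
    rw [← hus, HahnSeries.coeff_sub, huw, hE1 i hi, HahnSeries.coeff_one]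
    split_ifs <;> simp
  have hsd : s.coeff d₀ = (e : k) * w₀.coeff d₀ := by
    rw [← hus, HahnSeries.coeff_sub, huw, hE2, HahnSeries.coeff_one,
      if_neg hd₀pos.ne', sub_zero]
  have hd₀A : d₀ = (A : ℤ) := by
    have h1 : d₀ ≤ (A : ℤ) := le_of_not_gt fun h => by
      rw [hslow _ h] at hsA; simp at hsA
    have h2 : s.coeff d₀ ≠ 0 := by
      rw [hsd]
      exact mul_ne_zero hek ((coeff_order_eq_zero.not.mpr hw₀ne))
    rcases h1.lt_or_eq with h | h
    · exfalso
      apply h2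
      rw [hsc, if_neg h.ne, if_neg (by omega)]
      ring
    · exact h
  have hc₀ : w₀.coeff d₀ = (e : k)⁻¹ := by
    have h1 : (e : k) * w₀.coeff d₀ = 1 := by rw [← hsd, hd₀A, hsA]
    calc w₀.coeff d₀ = (e : k)⁻¹ * ((e : k) * w₀.coeff d₀) := by
          rw [← mul_assoc, inv_mul_cancel₀ hek, one_mul]
      _ = (e : k)⁻¹ := by rw [h1, mul_one]
  -- Frobenius step
  set w : LaurentSeries k := w₀ ^ (p ^ κ) with hwdef
  have hv : u ^ (p ^ κ) = 1 + w := by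
    rw [huw, add_pow_char_pow, one_pow, hwdef]
  obtain ⟨hF1, hF2⟩ := auxD w₀ d₀ hw₀lt (p ^ κ)
  set D : ℤ := ((p ^ κ : ℕ) : ℤ) * d₀ with hDdef
  have hwD : w.coeff D = (e : k)⁻¹ := by
    rw [hwdef, hDdef, hF2, hc₀, inv_pow, cast_pow_fix p hp e κ]
  have hD0 : 0 < D := by
    apply mul_pos _ hd₀pos
    exact_mod_cast pow_pos hp.pos κ
  have hwlow : ∀ i < D, w.coeff i = 0 := hF1
  obtain ⟨hG1, hG2⟩ := auxC w D hD0 hwlow j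
  -- zpow identities
  have hun : u ^ (j * (p : ℤ) ^ κ) = (1 + w) ^ j := by
    rw [← hv]
    have h1 : (p : ℤ) ^ κ = ((p ^ κ : ℕ) : ℤ) := by push_cast; ring
    set U : (LaurentSeries k)ˣ := Units.mk0 u hu0' with hU
    have hUu : (U : LaurentSeries k) = u := rfl
    rw [← hUu, ← Units.val_zpow_eq_zpow_val, h1, mul_comm j, zpow_mul, zpow_natCast,
      Units.val_zpow_eq_zpow_val, Units.val_pow_eq_pow_val]
  set y : LaurentSeries k := (1 + w) ^ j - 1 with hydef
  have hylow : ∀ i < D, y.coeff i = 0 := by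
    intro i hi
    rw [hydef, HahnSeries.coeff_sub, hG1 i hi, HahnSeries.coeff_one]
    split_ifs <;> simp
  have hyD : y.coeff D = (j : k) * (e : k)⁻¹ := by
    rw [hydef, HahnSeries.coeff_sub, hG2, hwD, HahnSeries.coeff_one,
      if_neg hD0.ne', sub_zero]
  have hyne : y ≠ 0 := ne_zero_of_coeff_ne_zero (by rw [hyD]; exact mul_ne_zero hjk (inv_ne_zero hek))
  have hyord : y.order = D := order_eq_of (by rw [hyD]; exact mul_ne_zero hjk (inv_ne_zero hek)) hylow
  -- assemble
  set nn : ℤ := j * (p : ℤ) ^ κ with hnn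
  have hxz : (single (1 : ℤ) (1 : k)) ^ nn = single nn 1 := single_zpow' _
  have hmain : γ₁ ((single (1 : ℤ) (1 : k)) ^ nn) - (single (1 : ℤ) (1 : k)) ^ nn
      = single nn 1 * y := by
    rw [map_zpow₀, hγ₁, mul_zpow, hun, hxz, hydef, mul_sub, mul_one]
  have hED : (e : ℤ) * (p : ℤ) ^ κ * ((p : ℤ) - 1) = D := by
    rw [hDdef, hd₀A, hA]
    have h1 : ((e * (p - 1) : ℕ) : ℤ) = (e : ℤ) * ((p : ℤ) - 1) := by
      push_cast [Nat.cast_sub hp.one_lt.le]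
      ring
    rw [h1]
    push_cast
    ring
  have hsing_ne : (single nn (1 : k) : LaurentSeries k) ≠ 0 := single_ne_zero one_ne_zero
  refine ⟨?_, ?_, ?_⟩
  · rw [hmain]
    exact mul_ne_zero hsing_ne hyne
  · rw [hmain, order_mul hsing_ne hyne, order_single one_ne_zero, hyord, hED]
  · rw [hmain, hED, add_comm nn D, coeff_single_mul_add, one_mul, hyD]
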